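/- Determination of the proportionality constant and vanishing of the bilinear traces (core of Corollary 3.2 / Lemma 3.5): let λ_1,…,λ_r ∈ W, a_1,…,a_r ∈ ℝ and Q ∈ ℂ, and suppose Σ_i a_i·F_{λ_i}(t,t') = Q·⟨t',t⟩ for all t,t' ∈ W. Then Q = (1/n)·Σ_i a_i·⟨λ_i,λ_i⟩, and for every normalized orthogonal basis (e_1,…,e_n) one has Σ_i a_i · Σ_{l=1}^{n} ⟨e_l,λ_i⟩² = 0 (the traces of the bilinear forms B_{λ_i}(x,y) = ⟨x,λ_i⟩⟨y,λ_i⟩ cancel). -/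

import Mathlib

open Complex

/-- The form `F_λ(x,y) = ⟨x,λ⟩⟨y,λ⟩ + ⟨λ,x⟩⟨y,λ⟩ (= 2Re(⟨x,λ⟩)·⟨y,λ⟩)`. -/
noncomputable def Fform {W : Type*} [AddCommGroup W] [Module ℂ W]
    (B : W →ₗ[ℂ] W →ₛₗ[starRingEnd ℂ] ℂ) (lam x y : W) : ℂ :=
  B x lam * B y lam + B lam x * B y lam

/-- Determination of the proportionality constant and vanishing of the bilinear
traces: if `Σᵢ aᵢ·F_{λᵢ}(t,t') = Q·⟨t',t⟩` for all `t,t'`, then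
`Q = (1/n)·Σᵢ aᵢ·⟨λᵢ,λᵢ⟩`, and for every normalized orthogonal basis the traces
of the bilinear forms `B_{λᵢ}` cancel: `Σᵢ aᵢ·Σₗ ⟨eₗ,λᵢ⟩² = 0`. -/
theorem proportionality_constant_and_trace {W : Type*} [AddCommGroup W]
    [Module ℂ W] [FiniteDimensional ℂ W]
    (n : ℕ) (hn : 1 ≤ n) (hdim : Module.finrank ℂ W = n)
    (B : W →ₗ[ℂ] W →ₛₗ[starRingEnd ℂ] ℂ)
    (hherm : ∀ v w : W, B w v = starRingEnd ℂ (B v w))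
    (hneg : ∀ w : W, w ≠ 0 → (B w w).re < 0)
    (r : ℕ) (lam : Fin r → W) (a : Fin r → ℝ) (Q : ℂ)
    (hQ : ∀ t t' : W, ∑ i, (a i : ℂ) * Fform B (lam i) t t' = Q * B t' t) :
    Q = (1 / (n : ℂ)) * ∑ i, (a i : ℂ) * B (lam i) (lam i)
      ∧ ∀ e : Module.Basis (Fin n) ℂ W,
          (∀ i j, B (e i) (e j) = if i = j then -1 else 0) →
          ∑ i, (a i : ℂ) * ∑ l, (B (e l) (lam i)) ^ 2 = 0 := by
  classical
  -- Key: the bilinear part vanishes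
  have hkey : ∀ t t' : W, ∑ i, (a i : ℂ) * (B t (lam i) * B t' (lam i)) = 0 := by
    intro t t'
    have h2 : (∑ i, (a i : ℂ) * (B t (lam i) * B t' (lam i)))
        + (∑ i, (a i : ℂ) * (B (lam i) t * B t' (lam i))) = Q * B t' t := by
      rw [← Finset.sum_add_distrib, ← hQ t t']
      refine Finset.sum_congr rfl fun i _ => ?_
      simp [Fform]; ring
    have h1 : Complex.I * (∑ i, (a i : ℂ) * (B t (lam i) * B t' (lam i)))
        - Complex.I * (∑ i, (a i : ℂ) * (B (lam i) t * B t' (lam i)))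
        = Q * (-Complex.I * B t' t) := by
      have h := hQ ((Complex.I : ℂ) • t) t'
      have hL : ∀ i, (a i : ℂ) * Fform B (lam i) ((Complex.I : ℂ) • t) t'
          = Complex.I * ((a i : ℂ) * (B t (lam i) * B t' (lam i)))
            - Complex.I * ((a i : ℂ) * (B (lam i) t * B t' (lam i))) := by
        intro i
        simp only [Fform, map_smul, LinearMap.smul_apply, LinearMap.map_smulₛₗ,
          Complex.conj_I, smul_eq_mul]
        ring
      have hR : B t' ((Complex.I : ℂ) • t) = -Complex.I * B t' t := by
        rw [LinearMap.map_smulₛₗ]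
        simp [Complex.conj_I]
      rw [hR] at h
      rw [← h]
      rw [Finset.mul_sum, Finset.mul_sum, ← Finset.sum_sub_distrib]
      exact (Finset.sum_congr rfl fun i _ => (hL i)).symm
    have h2I : (2 * Complex.I) ≠ 0 := mul_ne_zero two_ne_zero Complex.I_ne_zero
    have hz : (2 * Complex.I) * (∑ i, (a i : ℂ) * (B t (lam i) * B t' (lam i))) = 0 := by
      linear_combination h1 + Complex.I * h2
    exact (mul_eq_zero.mp hz).resolve_left h2I
  -- trace vanishing for any normalized basis
  have htrace : ∀ e : Module.Basis (Fin n) ℂ W,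
      (∀ i j, B (e i) (e j) = if i = j then -1 else 0) →
      ∑ i, (a i : ℂ) * ∑ l, (B (e l) (lam i)) ^ 2 = 0 := by
    intro e _
    have hswap : ∑ i, (a i : ℂ) * ∑ l, (B (e l) (lam i)) ^ 2
        = ∑ l, ∑ i, (a i : ℂ) * (B (e l) (lam i) * B (e l) (lam i)) := by
      rw [Finset.sum_comm]
      refine Finset.sum_congr rfl fun i _ => ?_
      rw [Finset.mul_sum]
      refine Finset.sum_congr rfl fun l _ => ?_
      ring
    rw [hswap]
    simp [hkey]
  refine ⟨?_, htrace⟩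
  -- existence of a normalized orthogonal basis
  obtain ⟨e, hbe⟩ : ∃ e : Module.Basis (Fin n) ℂ W,
      ∀ i j, B (e i) (e j) = if i = j then -1 else 0 := by
    letI core : InnerProductSpace.Core ℂ W :=
      { inner := fun x y => - B y x
        conj_inner_symm := by
          intro x y
          simp only [map_neg]
          rw [← hherm x y]
        re_inner_nonneg := by
          intro x
          rcases eq_or_ne x 0 with h | h
          · simp [h]
          · have := hneg x h
            simp only [map_neg, RCLike.re_to_complex, Complex.neg_re]
            linarith
        definite := by
          intro x hx
          by_contra h
          have h1 := hneg x h
          have h2 : -(B x x) = 0 := hx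
          have h3 : (-(B x x)).re = 0 := by rw [h2]; simp
          simp only [Complex.neg_re] at h3
          linarith
        add_left := by intro x y z; simp; ring
        smul_left := by intro x y r; simp [mul_comm] }
    letI : NormedAddCommGroup W := core.toNormedAddCommGroup
    letI : InnerProductSpace ℂ W := InnerProductSpace.ofCore core.toCore
    have hfr : Module.finrank ℂ W = n := hdim
    let b := (stdOrthonormalBasis ℂ W).reindex (finCongr hfr)
    refine ⟨b.toBasis, fun i j => ?_⟩
    have ho := orthonormal_iff_ite.mp b.orthonormal i j
    have hoB : - B (b j) (b i) = if i = j then (1 : ℂ) else 0 := ho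
    rw [OrthonormalBasis.coe_toBasis]
    by_cases hij : i = j
    · subst hij
      rw [if_pos rfl] at hoB ⊢
      linear_combination -hoB
    · simp only [if_neg hij] at hoB ⊢
      have hz : B (b j) (b i) = 0 := by linear_combination -hoB
      rw [hherm (b j) (b i), hz]
      simp
  -- now compute Q
  have hrep : ∀ v : W, ∀ l, B v (e l) = - (e.repr v l) := by
    intro v l
    conv_lhs => rw [← e.sum_repr v]
    rw [map_sum, LinearMap.sum_apply]
    simp only [map_smul, LinearMap.smul_apply, smul_eq_mul, hbe]
    rw [Finset.sum_eq_single l]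
    · simp
    · intro m _ hm; simp [hm]
    · intro hl; simp at hl
  have hrep2 : ∀ v : W, ∀ l, B (e l) v = - starRingEnd ℂ (e.repr v l) := by
    intro v l
    rw [hherm v (e l), hrep v l]
    simp
  have hcross : ∀ v : W, ∑ l, B v (e l) * B (e l) v = - B v v := by
    intro v
    have hvv : B v v = ∑ l, starRingEnd ℂ (e.repr v l) * (- (e.repr v l)) := by
      have h := congrArg (B v) (e.sum_repr v).symm
      rw [map_sum] at h
      rw [h]
      refine Finset.sum_congr rfl fun l _ => ?_
      rw [LinearMap.map_smulₛₗ, smul_eq_mul, hrep v l]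
    rw [hvv, ← Finset.sum_neg_distrib]
    refine Finset.sum_congr rfl fun l _ => ?_
    rw [hrep v l, hrep2 v l]
    ring
  have hsum : ∑ l, ∑ i, (a i : ℂ) * Fform B (lam i) (e l) (e l)
      = Q * ∑ l, B (e l) (e l) := by
    rw [Finset.mul_sum]
    exact Finset.sum_congr rfl fun l _ => hQ (e l) (e l)
  have hRHS : ∑ l, B (e l) (e l) = -(n : ℂ) := by
    simp [hbe]
  have hLHS : ∑ l, ∑ i, (a i : ℂ) * Fform B (lam i) (e l) (e l)
      = (∑ i, (a i : ℂ) * ∑ l, (B (e l) (lam i)) ^ 2)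
        - ∑ i, (a i : ℂ) * B (lam i) (lam i) := by
    rw [Finset.sum_comm, ← Finset.sum_sub_distrib]
    refine Finset.sum_congr rfl fun i _ => ?_
    have hstep : ∑ l, (a i : ℂ) * Fform B (lam i) (e l) (e l)
        = (a i : ℂ) * (∑ l, (B (e l) (lam i)) ^ 2)
          + (a i : ℂ) * (∑ l, B (lam i) (e l) * B (e l) (lam i)) := by
      rw [Finset.mul_sum, Finset.mul_sum, ← Finset.sum_add_distrib]
      refine Finset.sum_congr rfl fun l _ => ?_
      simp only [Fform]
      ring
    rw [hstep, hcross (lam i)]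
    ring
  have hS : ∑ i, (a i : ℂ) * ∑ l, (B (e l) (lam i)) ^ 2 = 0 := htrace e hbe
  have hn0 : (n : ℂ) ≠ 0 := Nat.cast_ne_zero.mpr (by omega)
  rw [hLHS, hS, hRHS] at hsum
  rw [one_div, inv_mul_eq_div, eq_div_iff hn0]
  linear_combination hsum
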